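/- Let A be a C_p-set in S and let R be a nonempty finite subset of ℙ. Then there exist functions α : P_f(ℕ→S) → S and H : P_f(ℕ→S) → P_f(ℕ) (where P_f(X) denotes the collection of nonempty finite subsets of X) such that: (1) if L₁, L₂ ∈ P_f(ℕ→S) and L₁ ⊊ L₂, then max H(L₁) < min H(L₂); and (2) whenever m ∈ ℕ, L₁ ⊊ L₂ ⊊ … ⊊ L_m in P_f(ℕ→S), and g_i ∈ L_i for each i ∈ {1,…,m}, then for every f ∈ R one has ∑_{i=1}^m α(L_i) + f(∑_{i=1}^m ∑_{t∈H(L_i)} g_i(t)) ∈ A. -/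

import Mathlib

/-- `A` is a `J_p`-set in `S ⊆ D`: for every nonempty finite set `R` of integral polynomials
on `D` (one-variable polynomials with zero constant term) and every nonempty finite set `L`
of functions `g : ℕ → S`, there are `a ∈ S` and a nonempty finite `H ⊆ ℕ` with
`a + f(∑_{t ∈ H} g(t)) ∈ A` for every `f ∈ R` and `g ∈ L`. -/
def JpSet {D : Type*} [CommRing D] (S A : Set D) : Prop :=
  ∀ R : Finset (Polynomial D), R.Nonempty → (∀ f ∈ R, f.coeff 0 = 0) →
    ∀ L : Finset (ℕ → D), L.Nonempty → (∀ g ∈ L, ∀ n, g n ∈ S) →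
      ∃ a ∈ S, ∃ H : Finset ℕ, H.Nonempty ∧
        ∀ f ∈ R, ∀ g ∈ L, a + Polynomial.eval (∑ t ∈ H, g t) f ∈ A

/-- The semigroup operation on `S`, coming from closure of `S` under addition. -/
def sAdd {D : Type*} [Add D] {S : Set D} (hadd : ∀ a ∈ S, ∀ b ∈ S, a + b ∈ S)
    (x y : S) : S :=
  ⟨↑x + ↑y, hadd _ x.2 _ y.2⟩

/-- `A ∈ p + q` for ultrafilters `p, q` on `S`:
`{x ∈ S : {y ∈ S : x + y ∈ A} ∈ q} ∈ p`. -/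
def memSum {D : Type*} [Add D] {S : Set D} (hadd : ∀ a ∈ S, ∀ b ∈ S, a + b ∈ S)
    (p q : Ultrafilter S) (A : Set S) : Prop :=
  {x : S | {y : S | sAdd hadd x y ∈ A} ∈ q} ∈ p

/-- `p + p = p` for an ultrafilter `p` on `S`, stated memberwise. -/
def IsIdempotentUF {D : Type*} [Add D] {S : Set D}
    (hadd : ∀ a ∈ S, ∀ b ∈ S, a + b ∈ S) (p : Ultrafilter S) : Prop :=
  ∀ A : Set S, A ∈ p ↔ memSum hadd p p A

/-- `A` is a `C_p`-set in `S`: there is an idempotent ultrafilter `p` on `S`, all of whose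
members are `J_p`-sets, with `A ∈ p`. -/
def CpSet {D : Type*} [CommRing D] (S : Set D)
    (hadd : ∀ a ∈ S, ∀ b ∈ S, a + b ∈ S) (A : Set D) : Prop :=
  ∃ p : Ultrafilter S, IsIdempotentUF hadd p ∧
    (∀ B ∈ p, JpSet S (Subtype.val '' B)) ∧
    (Subtype.val ⁻¹' A : Set S) ∈ p

/-- `L` represents a member of `P_f(ℕ → S)`: a nonempty finite set of functions `ℕ → S`. -/
def ValidL {D : Type*} (S : Set D) (L : Finset (ℕ → D)) : Prop :=
  L.Nonempty ∧ ∀ g ∈ L, ∀ n, g n ∈ S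

open scoped Classical

/-! ### Star sets for idempotent ultrafilters -/

namespace Stmt12Aux

def star {D : Type*} [Add D] {S : Set D} (hadd : ∀ a ∈ S, ∀ b ∈ S, a + b ∈ S)
    (p : Ultrafilter S) (B : Set S) : Set S :=
  {x | x ∈ B ∧ {y | sAdd hadd x y ∈ B} ∈ p}

lemma star_mem {D : Type*} [Add D] {S : Set D} {hadd : ∀ a ∈ S, ∀ b ∈ S, a + b ∈ S}
    {p : Ultrafilter S} (hid : IsIdempotentUF hadd p) {B : Set S} (hB : B ∈ p) :
    star hadd p B ∈ p := by
  have h2 : {x : S | {y | sAdd hadd x y ∈ B} ∈ p} ∈ p := (hid B).mp hB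
  have : star hadd p B = B ∩ {x : S | {y | sAdd hadd x y ∈ B} ∈ p} := rfl
  rw [this]
  exact Filter.inter_mem hB h2

lemma star_shift {D : Type*} [AddSemigroup D] {S : Set D}
    {hadd : ∀ a ∈ S, ∀ b ∈ S, a + b ∈ S}
    {p : Ultrafilter S} (hid : IsIdempotentUF hadd p) {B : Set S} (hB : B ∈ p)
    {x : S} (hx : x ∈ star hadd p B) :
    {y | sAdd hadd x y ∈ star hadd p B} ∈ p := by
  have hC : {y | sAdd hadd x y ∈ B} ∈ p := hx.2
  have hCs := star_mem hid hC
  refine Filter.mem_of_superset hCs ?_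
  intro y hy
  refine ⟨hy.1, ?_⟩
  have key : ∀ z, sAdd hadd x (sAdd hadd y z) = sAdd hadd (sAdd hadd x y) z := by
    intro z
    apply Subtype.ext
    exact (add_assoc (x : D) (y : D) (z : D)).symm
  have : {z | sAdd hadd y z ∈ {y | sAdd hadd x y ∈ B}} =
      {z | sAdd hadd (sAdd hadd x y) z ∈ B} := by
    ext z
    simp only [Set.mem_setOf_eq, key]
  rw [← this]
  exact hy.2

variable {D : Type*} [CommRing D]

/-! ### The recursive construction -/

noncomputable def dfin (R : Finset (Polynomial D)) (T' : Finset (D × D)) : Finset D :=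
  (T' ×ˢ R).image fun x => x.1.1 + Polynomial.eval x.1.2 x.2

noncomputable def rof (R : Finset (Polynomial D)) (T' : Finset (D × D)) :
    Finset (Polynomial D) :=
  ((insert (0 : D) (T'.image Prod.snd)) ×ˢ R).image fun x =>
    x.2.comp (Polynomial.X + Polynomial.C x.1) - Polynomial.C (Polynomial.eval x.1 x.2)

noncomputable def lsh (k : ℕ) (L : Finset (ℕ → D)) : Finset (ℕ → D) :=
  L.image fun g => fun t => g (t + k + 1)

def eset (Astar : Set D) (R : Finset (Polynomial D)) (T' : Finset (D × D)) : Set D :=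
  {y | y ∈ Astar ∧ ∀ d ∈ dfin R T', d + y ∈ Astar}

def exProp (S Astar : Set D) (R : Finset (Polynomial D)) (T' : Finset (D × D))
    (k : ℕ) (L : Finset (ℕ → D)) : Prop :=
  ∃ a, a ∈ S ∧ ∃ Hs : Finset ℕ, Hs.Nonempty ∧
    ∀ f ∈ rof R T', ∀ g ∈ lsh k L,
      a + Polynomial.eval (∑ t ∈ Hs, g t) f ∈ eset Astar R T'

noncomputable def chooseAH (S Astar : Set D) (R : Finset (Polynomial D))
    (T' : Finset (D × D)) (k : ℕ) (L : Finset (ℕ → D)) : D × Finset ℕ :=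
  if h : exProp S Astar R T' k L then ⟨h.choose, h.choose_spec.2.choose⟩ else ⟨0, ∅⟩

lemma chooseAH_spec {S Astar : Set D} {R : Finset (Polynomial D)} {T' : Finset (D × D)}
    {k : ℕ} {L : Finset (ℕ → D)} (h : exProp S Astar R T' k L) :
    (chooseAH S Astar R T' k L).1 ∈ S ∧ (chooseAH S Astar R T' k L).2.Nonempty ∧
      ∀ f ∈ rof R T', ∀ g ∈ lsh k L,
        (chooseAH S Astar R T' k L).1 +
          Polynomial.eval (∑ t ∈ (chooseAH S Astar R T' k L).2, g t) f ∈ eset Astar R T' := by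
  rw [chooseAH, dif_pos h]
  exact ⟨h.choose_spec.1, h.choose_spec.2.choose_spec.1, h.choose_spec.2.choose_spec.2⟩

noncomputable def tnew (a : D) (Hk : Finset ℕ) (T' : Finset (D × D)) (L : Finset (ℕ → D)) :
    Finset (D × D) :=
  ((insert ((0 : D), (0 : D)) T') ×ˢ (L.image fun g => ∑ t ∈ Hk, g t)).image
    fun x => (a + x.1.1, x.1.2 + x.2)

lemma mem_tnew_base {a : D} {Hk : Finset ℕ} {T' : Finset (D × D)} {L : Finset (ℕ → D)}
    {g : ℕ → D} (hg : g ∈ L) : (a, ∑ t ∈ Hk, g t) ∈ tnew a Hk T' L := by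
  rw [tnew, Finset.mem_image]
  refine ⟨(((0 : D), (0 : D)), ∑ t ∈ Hk, g t), ?_, by simp⟩
  rw [Finset.mem_product]
  exact ⟨Finset.mem_insert_self _ _, Finset.mem_image_of_mem _ hg⟩

lemma mem_tnew_step {a : D} {Hk : Finset ℕ} {T' : Finset (D × D)} {L : Finset (ℕ → D)}
    {s w : D} (hsw : (s, w) ∈ T') {g : ℕ → D} (hg : g ∈ L) :
    (a + s, w + ∑ t ∈ Hk, g t) ∈ tnew a Hk T' L := by
  rw [tnew, Finset.mem_image]
  refine ⟨((s, w), ∑ t ∈ Hk, g t), ?_, rfl⟩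
  rw [Finset.mem_product]
  exact ⟨Finset.mem_insert_of_mem hsw, Finset.mem_image_of_mem _ hg⟩

noncomputable def kof (G : Finset (ℕ → D) → D × Finset ℕ × Finset (D × D))
    (L : Finset (ℕ → D)) : ℕ :=
  (L.powerset.erase L).sup fun t => (G t).2.1.sup id

noncomputable def tprev (G : Finset (ℕ → D) → D × Finset ℕ × Finset (D × D))
    (L : Finset (ℕ → D)) : Finset (D × D) :=
  ((L.powerset.erase L).filter fun t => t.Nonempty).biUnion fun t => (G t).2.2

omit [CommRing D] in
lemma kof_congr {G G' : Finset (ℕ → D) → D × Finset ℕ × Finset (D × D)}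
    {L : Finset (ℕ → D)} (h : ∀ t, t ⊂ L → G t = G' t) : kof G L = kof G' L := by
  refine Finset.sup_congr rfl fun t ht => ?_
  rw [Finset.mem_erase, Finset.mem_powerset] at ht
  rw [h t (ssubset_of_ne_of_subset ht.1 ht.2)]

omit [CommRing D] in
lemma tprev_congr {G G' : Finset (ℕ → D) → D × Finset ℕ × Finset (D × D)}
    {L : Finset (ℕ → D)} (h : ∀ t, t ⊂ L → G t = G' t) : tprev G L = tprev G' L := by
  refine Finset.biUnion_congr rfl fun t ht => ?_
  rw [Finset.mem_filter, Finset.mem_erase, Finset.mem_powerset] at ht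
  rw [h t (ssubset_of_ne_of_subset ht.1.1 ht.1.2)]

noncomputable def stepFull (S Astar : Set D) (R : Finset (Polynomial D))
    (G : Finset (ℕ → D) → D × Finset ℕ × Finset (D × D)) (L : Finset (ℕ → D)) :
    D × Finset ℕ × Finset (D × D) :=
  let k := kof G L
  let T' := tprev G L
  let c := chooseAH S Astar R T' k L
  let HL := c.2.image fun t => t + k + 1
  (c.1, HL, tnew c.1 HL T' L)

lemma stepFull_congr (S Astar : Set D) (R : Finset (Polynomial D))
    {G G' : Finset (ℕ → D) → D × Finset ℕ × Finset (D × D)}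
    {L : Finset (ℕ → D)} (h : ∀ t, t ⊂ L → G t = G' t) :
    stepFull S Astar R G L = stepFull S Astar R G' L := by
  unfold stepFull
  rw [kof_congr h, tprev_congr h]

noncomputable def recF (S Astar : Set D) (R : Finset (Polynomial D)) :
    Finset (ℕ → D) → D × Finset ℕ × Finset (D × D) :=
  fun L => stepFull S Astar R
    (fun t => if ht : t ⊂ L then recF S Astar R t else ⟨0, ∅, ∅⟩) L
termination_by L => L.card
decreasing_by exact Finset.card_lt_card ht

lemma recF_eq (S Astar : Set D) (R : Finset (Polynomial D)) (L : Finset (ℕ → D)) :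
    recF S Astar R L = stepFull S Astar R (recF S Astar R) L := by
  rw [recF]
  exact stepFull_congr S Astar R fun t ht => dif_pos ht

lemma recF_fst (S Astar : Set D) (R : Finset (Polynomial D)) (L : Finset (ℕ → D)) :
    (recF S Astar R L).1 =
      (chooseAH S Astar R (tprev (recF S Astar R) L) (kof (recF S Astar R) L) L).1 := by
  rw [recF_eq]; rfl

lemma recF_snd (S Astar : Set D) (R : Finset (Polynomial D)) (L : Finset (ℕ → D)) :
    (recF S Astar R L).2.1 =
      (chooseAH S Astar R (tprev (recF S Astar R) L) (kof (recF S Astar R) L) L).2.image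
        (fun t => t + kof (recF S Astar R) L + 1) := by
  rw [recF_eq]; rfl

lemma recF_trd (S Astar : Set D) (R : Finset (Polynomial D)) (L : Finset (ℕ → D)) :
    (recF S Astar R L).2.2 =
      tnew (recF S Astar R L).1 (recF S Astar R L).2.1 (tprev (recF S Astar R) L) L := by
  conv_lhs => rw [recF_eq]
  rw [recF_fst, recF_snd]
  rfl

omit [CommRing D] in
lemma tF_subset_tprev {G : Finset (ℕ → D) → D × Finset ℕ × Finset (D × D)}
    {L' L : Finset (ℕ → D)} (hss : L' ⊂ L) (hne : L'.Nonempty) :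
    (G L').2.2 ⊆ tprev G L := by
  apply Finset.subset_biUnion_of_mem (fun t => (G t).2.2)
  rw [Finset.mem_filter, Finset.mem_erase, Finset.mem_powerset]
  exact ⟨⟨hss.ne, hss.subset⟩, hne⟩

/-! ### The existence lemma -/

lemma exProp_holds {S Astar : Set D} {p : Ultrafilter S}
    (hAstS : Astar ⊆ S)
    (hAp : (Subtype.val ⁻¹' Astar : Set S) ∈ p)
    (hshift : ∀ d ∈ Astar, (Subtype.val ⁻¹' {y | d + y ∈ Astar} : Set S) ∈ p)
    (hJ : ∀ B ∈ p, JpSet S (Subtype.val '' B))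
    {R : Finset (Polynomial D)} (hR : R.Nonempty) (hR0 : ∀ f ∈ R, f.coeff 0 = 0)
    {T' : Finset (D × D)} (hT' : ∀ d ∈ dfin R T', d ∈ Astar)
    {k : ℕ} {L : Finset (ℕ → D)} (hL : ValidL S L) :
    exProp S Astar R T' k L := by
  classical
  set B : Set S := Subtype.val ⁻¹' (eset Astar R T') with hBdef
  have hB : B ∈ p := by
    have hEq : B = (Subtype.val ⁻¹' Astar : Set S) ∩
        ⋂ d ∈ (dfin R T' : Finset D), (Subtype.val ⁻¹' {y | d + y ∈ Astar} : Set S) := by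
      ext x
      simp [hBdef, eset, Set.mem_iInter]
    rw [hEq]
    exact Filter.inter_mem hAp
      ((Filter.biInter_finset_mem (dfin R T')).mpr fun d hd => hshift d (hT' d hd))
  have hJB := hJ B hB
  -- the set of shifted polynomials
  have hRne : (rof R T').Nonempty := by
    obtain ⟨f, hf⟩ := hR
    have hmem : ((0 : D), f) ∈ (insert (0 : D) (T'.image Prod.snd)) ×ˢ R :=
      Finset.mem_product.mpr ⟨Finset.mem_insert_self _ _, hf⟩
    exact ⟨_, Finset.mem_image_of_mem _ hmem⟩
  have hR0' : ∀ f ∈ rof R T', f.coeff 0 = 0 := by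
    intro f' hf'
    rw [rof, Finset.mem_image] at hf'
    obtain ⟨x, _, rfl⟩ := hf'
    rw [Polynomial.coeff_zero_eq_eval_zero]
    simp [Polynomial.eval_comp]
  have hLne : (lsh k L).Nonempty := hL.1.image _
  have hLS : ∀ g ∈ lsh k L, ∀ n, g n ∈ S := by
    intro g' hg' n
    rw [lsh, Finset.mem_image] at hg'
    obtain ⟨g, hg, rfl⟩ := hg'
    exact hL.2 g hg _
  obtain ⟨a, haS, Hs, hHs, hprop⟩ := hJB (rof R T') hRne hR0' (lsh k L) hLne hLS
  refine ⟨a, haS, Hs, hHs, fun f hf g hg => ?_⟩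
  have := hprop f hf g hg
  exact Set.image_preimage_subset _ _ this

lemma eval_shift (f : Polynomial D) (w u : D) :
    Polynomial.eval u (f.comp (Polynomial.X + Polynomial.C w) -
        Polynomial.C (Polynomial.eval w f)) =
      Polynomial.eval (w + u) f - Polynomial.eval w f := by
  rw [Polynomial.eval_sub, Polynomial.eval_comp, Polynomial.eval_add, Polynomial.eval_X,
    Polynomial.eval_C, Polynomial.eval_C, add_comm]

lemma main_invariant {S Astar : Set D} {p : Ultrafilter S}
    (hAstS : Astar ⊆ S)
    (hAp : (Subtype.val ⁻¹' Astar : Set S) ∈ p)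
    (hshift : ∀ d ∈ Astar, (Subtype.val ⁻¹' {y | d + y ∈ Astar} : Set S) ∈ p)
    (hJ : ∀ B ∈ p, JpSet S (Subtype.val '' B))
    {R : Finset (Polynomial D)} (hR : R.Nonempty) (hR0 : ∀ f ∈ R, f.coeff 0 = 0) :
    ∀ L : Finset (ℕ → D), ValidL S L →
      ((recF S Astar R L).1 ∈ S ∧ (recF S Astar R L).2.1.Nonempty) ∧
      (∀ b ∈ (recF S Astar R L).2.1, kof (recF S Astar R) L < b) ∧
      (∀ x ∈ (recF S Astar R L).2.2, ∀ f ∈ R, x.1 + Polynomial.eval x.2 f ∈ Astar) := by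
  intro L
  induction L using Finset.strongInduction with
  | _ L ih =>
  intro hL
  have hT' : ∀ x ∈ tprev (recF S Astar R) L, ∀ f ∈ R,
      x.1 + Polynomial.eval x.2 f ∈ Astar := by
    intro x hx f hf
    rw [tprev, Finset.mem_biUnion] at hx
    obtain ⟨t, ht, hxt⟩ := hx
    rw [Finset.mem_filter, Finset.mem_erase, Finset.mem_powerset] at ht
    have hsub : t ⊂ L := ssubset_of_ne_of_subset ht.1.1 ht.1.2
    have hval : ValidL S t := ⟨ht.2, fun g hg n => hL.2 g (hsub.subset hg) n⟩
    exact (ih t hsub hval).2.2 x hxt f hf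
  have hd : ∀ d ∈ dfin R (tprev (recF S Astar R) L), d ∈ Astar := by
    intro d hd
    rw [dfin, Finset.mem_image] at hd
    obtain ⟨x, hx, rfl⟩ := hd
    rw [Finset.mem_product] at hx
    exact hT' x.1 hx.1 x.2 hx.2
  have hEx : exProp S Astar R (tprev (recF S Astar R) L) (kof (recF S Astar R) L) L :=
    exProp_holds hAstS hAp hshift hJ hR hR0 hd hL
  obtain ⟨haS, hHne, hspec⟩ := chooseAH_spec hEx
  refine ⟨⟨?_, ?_⟩, ?_, ?_⟩
  · rw [recF_fst]; exact haS
  · rw [recF_snd]; exact hHne.image _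
  · intro b hb
    rw [recF_snd, Finset.mem_image] at hb
    obtain ⟨t, _, rfl⟩ := hb
    omega
  · intro x hx f hf
    rw [recF_trd, recF_fst, recF_snd, tnew, Finset.mem_image] at hx
    obtain ⟨⟨⟨s', w'⟩, u0⟩, hy, rfl⟩ := hx
    rw [Finset.mem_product] at hy
    obtain ⟨hy1, hy2⟩ := hy
    rw [Finset.mem_image] at hy2
    obtain ⟨g, hgL, rfl⟩ := hy2
    have hsum : ∑ t ∈ (chooseAH S Astar R (tprev (recF S Astar R) L)
          (kof (recF S Astar R) L) L).2.image (fun t => t + kof (recF S Astar R) L + 1), g t =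
        ∑ t ∈ (chooseAH S Astar R (tprev (recF S Astar R) L)
          (kof (recF S Astar R) L) L).2, g (t + kof (recF S Astar R) L + 1) :=
      Finset.sum_image (by intro a _ b _ h; exact Nat.add_right_cancel (Nat.add_right_cancel h))
    have hgl : (fun t => g (t + kof (recF S Astar R) L + 1)) ∈
        lsh (kof (recF S Astar R) L) L := Finset.mem_image_of_mem _ hgL
    have hw' : w' ∈ insert (0 : D) ((tprev (recF S Astar R) L).image Prod.snd) ∨
        ((s', w') ∈ tprev (recF S Astar R) L) := by
      rcases Finset.mem_insert.mp hy1 with h00 | hT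
      · left; rw [Prod.mk.injEq] at h00; rw [h00.2]; exact Finset.mem_insert_self _ _
      · right; exact hT
    have hw'mem : w' ∈ insert (0 : D) ((tprev (recF S Astar R) L).image Prod.snd) := by
      rcases hw' with h | h
      · exact h
      · exact Finset.mem_insert_of_mem (Finset.mem_image_of_mem _ h)
    have hf' : f.comp (Polynomial.X + Polynomial.C w') -
        Polynomial.C (Polynomial.eval w' f) ∈ rof R (tprev (recF S Astar R) L) := by
      rw [rof, Finset.mem_image]
      exact ⟨(w', f), Finset.mem_product.mpr ⟨hw'mem, hf⟩, rfl⟩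
    have hmem : (chooseAH S Astar R (tprev (recF S Astar R) L)
          (kof (recF S Astar R) L) L).1 +
        Polynomial.eval (∑ t ∈ (chooseAH S Astar R (tprev (recF S Astar R) L)
            (kof (recF S Astar R) L) L).2, g (t + kof (recF S Astar R) L + 1))
          (f.comp (Polynomial.X + Polynomial.C w') -
            Polynomial.C (Polynomial.eval w' f)) ∈
        eset Astar R (tprev (recF S Astar R) L) := hspec _ hf' _ hgl
    rw [eval_shift] at hmem
    rcases Finset.mem_insert.mp hy1 with h00 | hT
    · rw [Prod.mk.injEq] at h00
      obtain ⟨rfl, rfl⟩ := h00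
      have hzero : Polynomial.eval (0 : D) f = 0 := by
        rw [← Polynomial.coeff_zero_eq_eval_zero]; exact hR0 f hf
      rw [hzero, sub_zero, zero_add] at hmem
      simp only [add_zero, zero_add]
      rw [hsum]
      exact hmem.1
    · have hdmem : s' + Polynomial.eval w' f ∈ dfin R (tprev (recF S Astar R) L) := by
        rw [dfin, Finset.mem_image]
        exact ⟨((s', w'), f), Finset.mem_product.mpr ⟨hT, hf⟩, rfl⟩
      have hres := hmem.2 _ hdmem
      have heq : ((chooseAH S Astar R (tprev (recF S Astar R) L)
            (kof (recF S Astar R) L) L).1 + s') +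
          Polynomial.eval (w' + ∑ t ∈ (chooseAH S Astar R (tprev (recF S Astar R) L)
            (kof (recF S Astar R) L) L).2, g (t + kof (recF S Astar R) L + 1)) f =
          (s' + Polynomial.eval w' f) +
            ((chooseAH S Astar R (tprev (recF S Astar R) L) (kof (recF S Astar R) L) L).1 +
              (Polynomial.eval (w' + ∑ t ∈ (chooseAH S Astar R (tprev (recF S Astar R) L)
                (kof (recF S Astar R) L) L).2, g (t + kof (recF S Astar R) L + 1)) f -
                Polynomial.eval w' f)) := by ring
      rw [hsum, heq]
      exact hres

end Stmt12Aux

/-- polynomial extension of the central sets theorem. Let `D` be an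
integral domain and `S ⊆ D` a nonempty set closed under addition with `0 ∉ S` whose
difference set is all of `D`. Let `A` be a `C_p`-set in `S` and `R` a nonempty finite set of
integral polynomials on `D`. Then there are functions `α : P_f(ℕ → S) → S` and
`H : P_f(ℕ → S) → P_f(ℕ)` such that: (1) if `L₁ ⊊ L₂` then `max H(L₁) < min H(L₂)`; and
(2) for every chain `L₁ ⊊ ⋯ ⊊ L_m` and choices `g_i ∈ L_i`, and every `f ∈ R`,
`∑_{i=1}^m α(L_i) + f(∑_{i=1}^m ∑_{t ∈ H(L_i)} g_i(t)) ∈ A`. -/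
theorem stmt12 {D : Type*} [CommRing D] [IsDomain D] (S : Set D)
    (hSne : S.Nonempty) (hadd : ∀ a ∈ S, ∀ b ∈ S, a + b ∈ S)
    (h0 : (0 : D) ∉ S) (hdiff : ∀ d : D, ∃ a ∈ S, ∃ b ∈ S, d = a - b)
    (A : Set D) (hAS : A ⊆ S) (hA : CpSet S hadd A)
    (R : Finset (Polynomial D)) (hR : R.Nonempty) (hR0 : ∀ f ∈ R, f.coeff 0 = 0) :
    ∃ (α : Finset (ℕ → D) → D) (H : Finset (ℕ → D) → Finset ℕ),
      (∀ L, ValidL S L → α L ∈ S ∧ (H L).Nonempty) ∧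
      (∀ L₁ L₂, ValidL S L₁ → ValidL S L₂ → L₁ ⊂ L₂ →
        ∀ a ∈ H L₁, ∀ b ∈ H L₂, a < b) ∧
      (∀ m : ℕ, 0 < m → ∀ L : Fin m → Finset (ℕ → D), (∀ i, ValidL S (L i)) →
        (∀ i j : Fin m, i < j → L i ⊂ L j) →
        ∀ g : Fin m → ℕ → D, (∀ i, g i ∈ L i) →
        ∀ f ∈ R,
          (∑ i, α (L i)) +
            Polynomial.eval (∑ i, ∑ t ∈ H (L i), g i t) f ∈ A) := by
  classical
  obtain ⟨p, hid, hpJ, hpA⟩ := hA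
  set A' : Set S := Subtype.val ⁻¹' A with hA'
  set AstD : Set D := Subtype.val '' (Stmt12Aux.star hadd p A') with hAst
  have hAstS : AstD ⊆ S := by rintro _ ⟨x, _, rfl⟩; exact x.2
  have hAstA : AstD ⊆ A := by rintro _ ⟨x, hx, rfl⟩; exact hx.1
  have hpre : (Subtype.val ⁻¹' AstD : Set S) = Stmt12Aux.star hadd p A' :=
    Set.preimage_image_eq _ Subtype.val_injective
  have hAp : (Subtype.val ⁻¹' AstD : Set S) ∈ p := by
    rw [hpre]; exact Stmt12Aux.star_mem hid hpA
  have hshift : ∀ d ∈ AstD, (Subtype.val ⁻¹' {y | d + y ∈ AstD} : Set S) ∈ p := by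
    rintro _ ⟨x, hx, rfl⟩
    have h1 := Stmt12Aux.star_shift hid hpA hx
    have h2 : (Subtype.val ⁻¹' {y | (x : D) + y ∈ AstD} : Set S) =
        {y | sAdd hadd x y ∈ Stmt12Aux.star hadd p A'} := by
      ext y
      simp only [Set.mem_preimage, Set.mem_setOf_eq, hAst]
      constructor
      · intro h
        obtain ⟨z, hz, hzeq⟩ := h
        have hzz : sAdd hadd x y = z := Subtype.ext hzeq.symm
        rwa [hzz]
      · intro h
        exact ⟨sAdd hadd x y, h, rfl⟩
    rw [h2]; exact h1
  have main := Stmt12Aux.main_invariant hAstS hAp hshift hpJ hR hR0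
  refine ⟨fun L => (Stmt12Aux.recF S AstD R L).1,
    fun L => (Stmt12Aux.recF S AstD R L).2.1, ?_, ?_, ?_⟩
  · intro L hL; exact (main L hL).1
  · intro L₁ L₂ h1 h2 hss a ha b hb
    have hmem : L₁ ∈ L₂.powerset.erase L₂ :=
      Finset.mem_erase.mpr ⟨hss.ne, Finset.mem_powerset.mpr hss.subset⟩
    have h3 : a ≤ (Stmt12Aux.recF S AstD R L₁).2.1.sup id := Finset.le_sup (f := id) ha
    have h4 : (Stmt12Aux.recF S AstD R L₁).2.1.sup id ≤
        Stmt12Aux.kof (Stmt12Aux.recF S AstD R) L₂ :=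
      Finset.le_sup (f := fun t => (Stmt12Aux.recF S AstD R t).2.1.sup id) hmem
    exact lt_of_le_of_lt (le_trans h3 h4) ((main L₂ h2).2.1 b hb)
  · intro m hm L hLv hchain g hg f hf
    set aa : ℕ → D := fun i =>
      if h : i < m then (Stmt12Aux.recF S AstD R (L ⟨i, h⟩)).1 else 0 with haa
    set ww : ℕ → D := fun i => if h : i < m then
        ∑ t ∈ (Stmt12Aux.recF S AstD R (L ⟨i, h⟩)).2.1, g ⟨i, h⟩ t else 0 with hww
    have haav : ∀ i (h : i < m), aa i = (Stmt12Aux.recF S AstD R (L ⟨i, h⟩)).1 := by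
      intro i h; rw [haa]; exact dif_pos h
    have hwwv : ∀ i (h : i < m),
        ww i = ∑ t ∈ (Stmt12Aux.recF S AstD R (L ⟨i, h⟩)).2.1, g ⟨i, h⟩ t := by
      intro i h; rw [hww]; exact dif_pos h
    have claim : ∀ n, ∀ hn : n < m,
        ((∑ i ∈ Finset.range (n+1), aa i), (∑ i ∈ Finset.range (n+1), ww i)) ∈
          (Stmt12Aux.recF S AstD R (L ⟨n, hn⟩)).2.2 := by
      intro n
      induction n with
      | zero =>
        intro hn
        rw [Finset.sum_range_one, Finset.sum_range_one, haav 0 hn, hwwv 0 hn,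
          Stmt12Aux.recF_trd]
        exact Stmt12Aux.mem_tnew_base (hg ⟨0, hn⟩)
      | succ n ihn =>
        intro hn
        have hlt : n < m := by omega
        have hprev := ihn hlt
        have hss : L ⟨n, hlt⟩ ⊂ L ⟨n+1, hn⟩ :=
          hchain _ _ (Fin.mk_lt_mk.mpr (Nat.lt_succ_self n))
        have hprev' := Stmt12Aux.tF_subset_tprev (G := Stmt12Aux.recF S AstD R)
          hss (hLv ⟨n, hlt⟩).1 hprev
        have hstep := Stmt12Aux.mem_tnew_step
          (a := (Stmt12Aux.recF S AstD R (L ⟨n+1, hn⟩)).1)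
          (Hk := (Stmt12Aux.recF S AstD R (L ⟨n+1, hn⟩)).2.1)
          hprev' (hg ⟨n+1, hn⟩)
        rw [Finset.sum_range_succ (f := aa), Finset.sum_range_succ (f := ww),
          haav (n+1) hn, hwwv (n+1) hn,
          Stmt12Aux.recF_trd, add_comm (∑ i ∈ Finset.range (n+1), aa i) _]
        exact hstep
    have hmm : m - 1 < m := by omega
    have hfin := claim (m-1) hmm
    have hms : m - 1 + 1 = m := by omega
    rw [hms] at hfin
    have hres := (main (L ⟨m-1, hmm⟩) (hLv _)).2.2 _ hfin f hf
    have e1 : ∑ i : Fin m, (Stmt12Aux.recF S AstD R (L i)).1 =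
        ∑ i ∈ Finset.range m, aa i := by
      rw [← Fin.sum_univ_eq_sum_range aa m]
      exact Finset.sum_congr rfl fun i _ => (haav i.1 i.2).symm
    have e2 : ∑ i : Fin m, ∑ t ∈ (Stmt12Aux.recF S AstD R (L i)).2.1, g i t =
        ∑ i ∈ Finset.range m, ww i := by
      rw [← Fin.sum_univ_eq_sum_range ww m]
      exact Finset.sum_congr rfl fun i _ => (hwwv i.1 i.2).symm
    rw [e1, e2]
    exact hAstA hres
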